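/- arXiv:2207.08300 — 3 statements merged into one kernel-verified Lean document; each statement's English description precedes it below -/
import Mathlib

section
/- The shuffle product distributes over the composition product from the left: for series c, d ∈ ℝ⟨⟨X'⟩⟩ and e ∈ ℝ^ℓ⟨⟨X⟩⟩ with |X'| = ℓ+1, one has (c ⧢ d) ∘ e = (c ∘ e) ⧢ (d ∘ e). In other words, for fixed e, the map c ↦ c ∘ e is a homomorphism of shuffle algebras. -/
open scoped BigOperators

namespace FPS

/-- A (noncommutative) formal power series over alphabet `X` is a map from words to `ℝ`. -/
abbrev Series (X : Type*) := List X → ℝ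

noncomputable section

variable {X : Type*} [DecidableEq X]

/-- The series `1·∅`. -/
def one : Series X := fun η => if η = [] then 1 else 0

/-- Cauchy (concatenation) product. -/
def cauchy (c d : Series X) : Series X := fun η =>
  ∑ i ∈ Finset.range (η.length + 1), c (η.take i) * d (η.drop i)

/-- Shuffle product. -/
def sh (c d : Series X) : List X → ℝ
  | [] => c [] * d []
  | x :: t => sh (fun w => c (x :: w)) d t + sh c (fun w => d (x :: w)) t

/-- Cauchy powers. -/
def cpow (c : Series X) : ℕ → Series X
  | 0 => one
  | k + 1 => cauchy c (cpow c k)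

/-- Shuffle powers. -/
def shpow (c : Series X) : ℕ → Series X
  | 0 => one
  | k + 1 => sh c (shpow c k)

/-- The proper series `1 - s/(s,∅)` entering the inverse formulas (negated proper part of `s/(s,∅)`). -/
def sprime (s : Series X) : Series X := fun w => if w = [] then 0 else - (s w / s [])

/-- Cauchy inverse `(s,∅)⁻¹ Σ_k (s')^k` of a purely improper series. -/
def cInv (s : Series X) : Series X := fun η =>
  (s [])⁻¹ * ∑ k ∈ Finset.range (η.length + 1), cpow (sprime s) k η

/-- Shuffle inverse `(s,∅)⁻¹ Σ_k (s')^{⧢k}` of a purely improper series. -/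
def shInv (s : Series X) : Series X := fun η =>
  (s [])⁻¹ * ∑ k ∈ Finset.range (η.length + 1), shpow (sprime s) k η

/-- The order: minimal length of a word in the support (`⊤` for the zero series). -/
def ord (c : Series X) : ℕ∞ := sInf ((fun η : List X => (η.length : ℕ∞)) '' {η | c η ≠ 0})

/-- `σ^n` with `σ^⊤ = 0`. -/
def powE (σ : ℝ) : ℕ∞ → ℝ := fun n => if n = ⊤ then 0 else σ ^ n.toNat

/-- The ultrametric `κ(c,d) = σ^{ord(c-d)}`. -/
def kappa (σ : ℝ) (c d : Series X) : ℝ := powE σ (ord (c - d))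

/-- Order of a vector of series (minimum over components). -/
def ordV {n : ℕ} (c : Fin n → Series X) : ℕ∞ := ⨅ i, ord (c i)

/-- Ultrametric on vectors of series. -/
def kappaV (σ : ℝ) {n : ℕ} (c d : Fin n → Series X) : ℝ := powE σ (ordV (c - d))

/-- Proper part `c - (c,∅)∅`. -/
def properPart (c : Series X) : Series X := fun w => if w = [] then 0 else c w

/-- Left concatenation by a letter: `x·s`. -/
def leftc (x : X) (s : Series X) : Series X := fun η =>
  match η with
  | [] => 0
  | y :: t => if y = x then s t else 0

end

noncomputable section

/-- `φ̄_d(η)` : the algebra homomorphism defining the multiplicative mixed composition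
product, with `φ̄_d(x_0)(w) = x_0 w` and `φ̄_d(x_i)(w) = x_i (d_i ⧢ w)`. -/
def phiWord {m : ℕ} (d : Fin m → Series (Fin (m + 1))) :
    List (Fin (m + 1)) → Series (Fin (m + 1)) → Series (Fin (m + 1))
  | [], w => w
  | i :: t, w =>
      Fin.cases (leftc 0 (phiWord d t w)) (fun j => leftc j.succ (sh (d j) (phiWord d t w))) i

/-- Multiplicative mixed composition product `c ∘̄ δ_d = Σ_η (c,η) φ̄_d(η)(1)`. -/
def mix {m : ℕ} (c : Series (Fin (m + 1))) (d : Fin m → Series (Fin (m + 1))) :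
    Series (Fin (m + 1)) := fun η =>
  ∑ k ∈ Finset.range (η.length + 1),
    ∑ v : List.Vector (Fin (m + 1)) k, c v.toList * phiWord d v.toList one η

/-- `ψ_e(η)` : the algebra homomorphism defining the composition product, with
`ψ_e(x'_i)(w) = x_0 (e_i ⧢ w)`, `e_0 = 1∅`. -/
def psiWord {ℓ m : ℕ} (e : Fin ℓ → Series (Fin (m + 1))) :
    List (Fin (ℓ + 1)) → Series (Fin (m + 1)) → Series (Fin (m + 1))
  | [], w => w
  | i :: t, w => leftc 0 (sh (Fin.cases one e i) (psiWord e t w))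

/-- Composition product `c ∘ e = Σ_η (c,η) ψ_e(η)(1)`. -/
def comp {ℓ m : ℕ} (c : Series (Fin (ℓ + 1))) (e : Fin ℓ → Series (Fin (m + 1))) :
    Series (Fin (m + 1)) := fun η =>
  ∑ k ∈ Finset.range (η.length + 1),
    ∑ v : List.Vector (Fin (ℓ + 1)) k, c v.toList * psiWord e v.toList one η

/-- The multiplicative composition product on `δ`-series:
`δ_c ∘ δ_d = δ_{d ⧢ (c ∘̄ δ_d)}`, expressed on the underlying series. -/
def star {m : ℕ} (c d : Fin m → Series (Fin (m + 1))) : Fin m → Series (Fin (m + 1)) :=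
  fun i => sh (d i) (mix (c i) d)

/-- The all-ones series vector (generating series of the identity `δ_1`). -/
def oneV {X : Type*} [DecidableEq X] (m : ℕ) : Fin m → Series X := fun _ => one

open Classical in
/-- The inverse `d^{∘-1}` in the multiplicative dynamic output feedback group: the unique
solution of `e = d^{⧢-1} ∘̄ δ_e`. -/
def dynInv {m : ℕ} (d : Fin m → Series (Fin (m + 1))) : Fin m → Series (Fin (m + 1)) :=
  if h : ∃ e : Fin m → Series (Fin (m + 1)), e = fun i => mix (shInv (d i)) e then h.choose
  else oneV m

/-- Shuffle power of a family: `c^{⧢n} = c_1^{⧢n_1} ⧢ ⋯ ⧢ c_ℓ^{⧢n_ℓ}`. -/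
def shFam {X : Type*} [DecidableEq X] {ℓ : ℕ} (c : Fin ℓ → Series X) (n : Fin ℓ →₀ ℕ) :
    Series X :=
  (List.finRange ℓ).foldr (fun i acc => sh (shpow (c i) (n i)) acc) one

/-- Wiener-Fliess composition product `d ∘̂ c = Σ_{η∈X̃*} (d,η) c^{⧢η}` of a commutative
series `d` with a (proper) noncommutative series vector `c`. -/
def wf {X : Type*} [DecidableEq X] {ℓ : ℕ} (d : MvPowerSeries (Fin ℓ) ℝ)
    (c : Fin ℓ → Series X) : Series X := fun η =>
  ∑ n ∈ Finset.Iic (Finsupp.equivFunOnFinite.symm fun _ : Fin ℓ => η.length),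
    MvPowerSeries.coeff n d * shFam c n η

end


section ShLemmas

variable {X : Type*} [DecidableEq X]

lemma sh_add_right : ∀ (t : List X) (a b b' : Series X),
    sh a (fun w => b w + b' w) t = sh a b t + sh a b' t := by
  intro t
  induction t with
  | nil => intro a b b'; simp only [sh]; ring
  | cons x t ih =>
    intro a b b'
    simp only [sh]
    rw [ih, ih]
    ring

lemma sh_congr_right : ∀ (t : List X) (a b b' : Series X),
    (∀ w : List X, w.length ≤ t.length → b w = b' w) → sh a b t = sh a b' t := by
  intro t
  induction t with
  | nil => intro a b b' h; simp only [sh]; rw [h [] (by simp)]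
  | cons x t ih =>
    intro a b b' h
    simp only [sh]
    rw [ih _ b b' (fun w hw => h w (by simp; omega)),
      ih a (fun w => b (x :: w)) (fun w => b' (x :: w)) (fun w hw => h (x :: w) (by simp; omega))]

lemma sh_zero_right : ∀ (t : List X) (a : Series X), sh a (fun _ => (0 : ℝ)) t = 0 := by
  intro t
  induction t with
  | nil => intro a; simp only [sh]; ring
  | cons x t ih => intro a; simp only [sh]; rw [ih, ih]; ring

lemma sh_smul_right : ∀ (t : List X) (a b : Series X) (r : ℝ),
    sh a (fun w => r * b w) t = r * sh a b t := by
  intro t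
  induction t with
  | nil => intro a b r; simp only [sh]; ring
  | cons x t ih => intro a b r; simp only [sh]; rw [ih, ih]; ring

lemma sh_comm : ∀ (t : List X) (a b : Series X), sh a b t = sh b a t := by
  intro t
  induction t with
  | nil => intro a b; simp only [sh]; ring
  | cons x t ih => intro a b; simp only [sh]; rw [ih _ b, ih a]; ring

lemma sh_add_left (t : List X) (a a' b : Series X) :
    sh (fun w => a w + a' w) b t = sh a b t + sh a' b t := by
  rw [sh_comm, sh_add_right, sh_comm t b a, sh_comm t b a']

lemma sh_zero_left (t : List X) (b : Series X) : sh (fun _ => (0 : ℝ)) b t = 0 := by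
  rw [sh_comm, sh_zero_right]

lemma sh_assoc : ∀ (t : List X) (a b c : Series X),
    sh (sh a b) c t = sh a (sh b c) t := by
  intro t
  induction t with
  | nil => intro a b c; simp only [sh]; ring
  | cons x t ih =>
    intro a b c
    simp only [sh]
    rw [sh_add_left, sh_add_right, ih, ih, ih]
    ring

lemma sh_sum_right {ι : Type*} (s : Finset ι) (a : Series X) (g : ι → Series X) (t : List X) :
    sh a (fun w => ∑ i ∈ s, g i w) t = ∑ i ∈ s, sh a (g i) t := by
  classical
  induction s using Finset.cons_induction with
  | empty => simpa using sh_zero_right t a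
  | cons i s hi ih =>
    rw [Finset.sum_cons, show (fun w => ∑ j ∈ Finset.cons i s hi, g j w)
      = fun w => g i w + ∑ j ∈ s, g j w from funext fun w => Finset.sum_cons hi,
      sh_add_right, ih]

lemma sh_sum_left {ι : Type*} (s : Finset ι) (g : ι → Series X) (b : Series X) (t : List X) :
    sh (fun w => ∑ i ∈ s, g i w) b t = ∑ i ∈ s, sh (g i) b t := by
  rw [sh_comm, sh_sum_right]
  exact Finset.sum_congr rfl fun i _ => sh_comm t b (g i)

end ShLemmas

section CompLemmas

lemma psi_vanish {ℓ m : ℕ} (e : Fin ℓ → Series (Fin (m + 1))) :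
    ∀ (u : List (Fin (ℓ + 1))) (η : List (Fin (m + 1))),
      η.length < u.length → psiWord e u one η = 0 := by
  intro u
  induction u with
  | nil => intro η h; simp at h
  | cons i u ih =>
    intro η h
    match η with
    | [] => rfl
    | y :: t =>
      show leftc 0 (sh (Fin.cases one e i) (psiWord e u one)) (y :: t) = 0
      simp only [leftc]
      split
      · rw [sh_congr_right t _ _ (fun _ => 0)
          (fun w hw => ih w (by simp at h ⊢; omega)), sh_zero_right]
      · rfl

lemma comp_nil {ℓ m : ℕ} (c : Series (Fin (ℓ + 1))) (e : Fin ℓ → Series (Fin (m + 1))) :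
    comp c e [] = c [] := by
  unfold comp
  simp only [List.length_nil, zero_add, Finset.sum_range_one]
  have h : ∀ v : List.Vector (Fin (ℓ + 1)) 0,
      c v.toList * psiWord e v.toList one [] = c [] := by
    intro v
    have hv : v.toList = [] := List.length_eq_zero_iff.mp v.toList_length
    rw [hv]
    show c [] * one [] = c []
    simp [one]
  rw [Finset.sum_congr rfl (fun v _ => h v), Finset.sum_const, Finset.card_univ, card_vector]
  simp

lemma comp_add {ℓ m : ℕ} (c₁ c₂ : Series (Fin (ℓ + 1))) (e : Fin ℓ → Series (Fin (m + 1)))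
    (η : List (Fin (m + 1))) :
    comp (fun w => c₁ w + c₂ w) e η = comp c₁ e η + comp c₂ e η := by
  simp [comp, add_mul, Finset.sum_add_distrib]

/-- The equivalence `α × Vector α j ≃ Vector α (j+1)` by `cons`. -/
def vconsEquiv (α : Type*) (j : ℕ) : α × List.Vector α j ≃ List.Vector α (j + 1) where
  toFun p := List.Vector.cons p.1 p.2
  invFun v := (v.head, v.tail)
  left_inv := fun ⟨a, v⟩ => by simp
  right_inv := fun v => by simp

lemma sum_vector_succ {α : Type*} [Fintype α] (j : ℕ) (F : List α → ℝ) :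
    ∑ v : List.Vector α (j + 1), F v.toList
      = ∑ i : α, ∑ u : List.Vector α j, F (i :: u.toList) := by
  rw [← Equiv.sum_comp (vconsEquiv α j) (fun v => F v.toList), Fintype.sum_prod_type]
  exact Finset.sum_congr rfl fun i _ => Finset.sum_congr rfl fun u _ => by
    simp [vconsEquiv, List.Vector.toList_cons]

lemma comp_cons {ℓ m : ℕ} (c : Series (Fin (ℓ + 1))) (e : Fin ℓ → Series (Fin (m + 1)))
    (x : Fin (m + 1)) (t : List (Fin (m + 1))) :
    comp c e (x :: t) =
      if x = 0 then
        ∑ i : Fin (ℓ + 1), sh (Fin.cases one e i) (comp (fun w => c (i :: w)) e) t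
      else 0 := by
  have hpsi : ∀ (i : Fin (ℓ + 1)) (u : List (Fin (ℓ + 1))),
      psiWord e (i :: u) one (x :: t)
        = if x = 0 then sh (Fin.cases one e i) (psiWord e u one) t else 0 := by
    intro i u
    rfl
  have hL : comp c e (x :: t) = ∑ k ∈ Finset.range (t.length + 1 + 1),
      ∑ v : List.Vector (Fin (ℓ + 1)) k, c v.toList * psiWord e v.toList one (x :: t) := rfl
  rw [hL, Finset.sum_range_succ']
  have h0 : ∑ v : List.Vector (Fin (ℓ + 1)) 0,
      c v.toList * psiWord e v.toList one (x :: t) = 0 := by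
    apply Finset.sum_eq_zero
    intro v _
    have hv : v.toList = [] := List.length_eq_zero_iff.mp v.toList_length
    rw [hv]
    show c [] * one (x :: t) = 0
    simp [one]
  rw [h0, add_zero]
  have hsplit : ∀ k, ∑ v : List.Vector (Fin (ℓ + 1)) (k + 1),
      c v.toList * psiWord e v.toList one (x :: t)
      = ∑ i : Fin (ℓ + 1), ∑ u : List.Vector (Fin (ℓ + 1)) k,
          c (i :: u.toList) *
            (if x = 0 then sh (Fin.cases one e i) (psiWord e u.toList one) t else 0) := by
    intro k
    rw [sum_vector_succ k (fun L => c L * psiWord e L one (x :: t))]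
    exact Finset.sum_congr rfl fun i _ => Finset.sum_congr rfl fun u _ => by
      rw [hpsi]
  by_cases hx : x = 0
  · simp only [if_pos hx]
    -- Rewrite the RHS sum over i.
    have hrhs : ∀ i : Fin (ℓ + 1),
        sh (Fin.cases one e i) (comp (fun w => c (i :: w)) e) t
          = ∑ k ∈ Finset.range (t.length + 1), ∑ u : List.Vector (Fin (ℓ + 1)) k,
              c (i :: u.toList) * sh (Fin.cases one e i) (psiWord e u.toList one) t := by
      intro i
      have hext : ∀ η : List (Fin (m + 1)), η.length ≤ t.length →
          comp (fun w => c (i :: w)) e η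
            = ∑ k ∈ Finset.range (t.length + 1), ∑ u : List.Vector (Fin (ℓ + 1)) k,
                c (i :: u.toList) * psiWord e u.toList one η := by
        intro η hη
        have hLη : comp (fun w => c (i :: w)) e η
            = ∑ k ∈ Finset.range (η.length + 1), ∑ u : List.Vector (Fin (ℓ + 1)) k,
                c (i :: u.toList) * psiWord e u.toList one η := rfl
        rw [hLη]
        apply Finset.sum_subset (Finset.range_subset_range.mpr (by omega))
        intro k _ hk
        apply Finset.sum_eq_zero
        intro u _
        rw [psi_vanish e u.toList η (by rw [u.toList_length]; simp at hk; omega), mul_zero]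
      rw [sh_congr_right t _ _ _ hext, sh_sum_right]
      refine Finset.sum_congr rfl fun k _ => ?_
      rw [sh_sum_right]
      refine Finset.sum_congr rfl fun u _ => ?_
      rw [sh_smul_right]
    rw [Finset.sum_congr rfl fun k _ => hsplit k,
        Finset.sum_congr rfl fun (i : Fin (ℓ + 1)) (_ : i ∈ Finset.univ) => hrhs i,
        Finset.sum_comm]
    exact Finset.sum_congr rfl fun k _ => Finset.sum_congr rfl fun i _ =>
      Finset.sum_congr rfl fun u _ => by rw [if_pos hx]
  · simp only [if_neg hx]
    rw [Finset.sum_congr rfl fun k _ => hsplit k]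
    apply Finset.sum_eq_zero
    intro k _
    apply Finset.sum_eq_zero
    intro i _
    apply Finset.sum_eq_zero
    intro u _
    rw [if_neg hx, mul_zero]

lemma comp_sh_key {ℓ m : ℕ} (e : Fin ℓ → Series (Fin (m + 1))) :
    ∀ (n : ℕ) (η : List (Fin (m + 1))), η.length ≤ n →
      ∀ c d : Series (Fin (ℓ + 1)),
        comp (sh c d) e η = sh (comp c e) (comp d e) η := by
  intro n
  induction n with
  | zero =>
    intro η hη c d
    have : η = [] := List.length_eq_zero_iff.mp (Nat.le_zero.mp hη)
    subst this
    rw [comp_nil]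
    show sh c d [] = sh (comp c e) (comp d e) []
    simp only [sh]
    rw [comp_nil, comp_nil]
  | succ n ih =>
    intro η hη c d
    match η with
    | [] =>
      rw [comp_nil]
      show sh c d [] = sh (comp c e) (comp d e) []
      simp only [sh]
      rw [comp_nil, comp_nil]
    | x :: t =>
      have ht : t.length ≤ n := by simp at hη; omega
      rw [comp_cons]
      have hshcons : sh (comp c e) (comp d e) (x :: t)
          = sh (fun w => comp c e (x :: w)) (comp d e) t
            + sh (comp c e) (fun w => comp d e (x :: w)) t := rfl
      rw [hshcons]
      by_cases hx : x = 0
      · rw [if_pos hx]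
        have hc : (fun w => comp c e (x :: w))
            = fun w => ∑ i : Fin (ℓ + 1),
                sh (Fin.cases one e i) (comp (fun v => c (i :: v)) e) w :=
          funext fun w => by rw [comp_cons, if_pos hx]
        have hd : (fun w => comp d e (x :: w))
            = fun w => ∑ i : Fin (ℓ + 1),
                sh (Fin.cases one e i) (comp (fun v => d (i :: v)) e) w :=
          funext fun w => by rw [comp_cons, if_pos hx]
        rw [hc, hd, sh_sum_left, sh_sum_right, ← Finset.sum_add_distrib]
        refine Finset.sum_congr rfl fun i _ => ?_
        have hder : (fun w => sh c d (i :: w))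
            = fun w => sh (fun v => c (i :: v)) d w + sh c (fun v => d (i :: v)) w := rfl
        rw [hder,
          sh_congr_right t _ _ _ (fun w hw => comp_add _ _ e w),
          sh_add_right,
          sh_congr_right t (Fin.cases one e i) _ _
            (fun w hw => ih w (by omega) (fun v => c (i :: v)) d),
          sh_congr_right t (Fin.cases one e i) _ _
            (fun w hw => ih w (by omega) c (fun v => d (i :: v))),
          ← sh_assoc, ← sh_assoc]
        congr 1
        rw [show sh (Fin.cases one e i) (comp c e) = sh (comp c e) (Fin.cases one e i)
          from funext fun w => sh_comm w _ _, sh_assoc]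
      · rw [if_neg hx]
        have hc : (fun w => comp c e (x :: w)) = fun _ => (0 : ℝ) :=
          funext fun w => by rw [comp_cons, if_neg hx]
        have hd : (fun w => comp d e (x :: w)) = fun _ => (0 : ℝ) :=
          funext fun w => by rw [comp_cons, if_neg hx]
        rw [hc, hd, sh_zero_left, sh_zero_right]
        ring

end CompLemmas

/-- The shuffle product distributes over the composition product from the
left: `(c ⧢ d) ∘ e = (c ∘ e) ⧢ (d ∘ e)`. -/
theorem shuffle_distributes_over_comp (ℓ m : ℕ)
    (c d : Series (Fin (ℓ + 1))) (e : Fin ℓ → Series (Fin (m + 1))) :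
    comp (sh c d) e = sh (comp c e) (comp d e) := by
  funext η
  exact comp_sh_key e η.length η le_rfl c d

end FPS
end

section
/- The composition product is a strong contraction in its right argument: for c ∈ ℝ⟨⟨X'⟩⟩ and d, e ∈ ℝ^ℓ⟨⟨X⟩⟩, κ(c ∘ d, c ∘ e) ≤ σ·κ(d,e), where κ is the ultrametric κ(a,b) = σ^{ord(a−b)} with σ ∈ (0,1). -/
open scoped BigOperators

namespace FPS

section Aux

variable {X : Type*} [DecidableEq X]

lemma ord_le_of_ne {c : Series X} {w : List X} (h : c w ≠ 0) :
    ord c ≤ (w.length : ℕ∞) :=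
  sInf_le ⟨w, h, rfl⟩

lemma eq_zero_of_lt_ord {c : Series X} {w : List X} (h : (w.length : ℕ∞) < ord c) :
    c w = 0 := by
  by_contra hne
  exact absurd (ord_le_of_ne hne) (not_le_of_gt h)

lemma le_ord {c : Series X} {n : ℕ∞} (h : ∀ w : List X, (w.length : ℕ∞) < n → c w = 0) :
    n ≤ ord c := by
  refine le_sInf ?_
  rintro a ⟨w, hw, rfl⟩
  exact le_of_not_gt fun hlt => hw (h w hlt)

lemma powE_anti {σ : ℝ} (h0 : 0 < σ) (h1 : σ < 1) {a b : ℕ∞} (h : a ≤ b) :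
    powE σ b ≤ powE σ a := by
  cases b with
  | top =>
    have hb : powE σ ⊤ = 0 := by simp [powE]
    rw [hb]
    unfold powE
    split
    · exact le_rfl
    · exact pow_nonneg h0.le _
  | coe b =>
    have ha : a ≠ ⊤ := fun hc => by simp [hc] at h
    lift a to ℕ using ha
    unfold powE
    simp only [if_neg (by simp : ((b : ℕ∞)) ≠ ⊤), if_neg (by simp : ((a : ℕ∞)) ≠ ⊤)]
    have hab : a ≤ b := by exact_mod_cast h
    exact pow_le_pow_of_le_one h0.le h1.le (by simpa using hab)

lemma powE_coe (σ : ℝ) (k : ℕ) : powE σ ((k : ℕ∞)) = σ ^ k := by simp [powE]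

lemma sh_congr : ∀ (w : List X) (f f' g g' : Series X),
    (∀ u : List X, u.length ≤ w.length → f u = f' u) →
    (∀ u : List X, u.length ≤ w.length → g u = g' u) →
    sh f g w = sh f' g' w
  | [], f, f', g, g', hf, hg => by
      simp only [sh, hf [] (by simp), hg [] (by simp)]
  | x :: t, f, f', g, g', hf, hg => by
      simp only [sh]
      congr 1
      · exact sh_congr t _ _ _ _
          (fun u hu => hf (x :: u) (by simpa using Nat.succ_le_succ hu))
          (fun u hu => hg u (le_trans hu (Nat.le_succ _)))
      · exact sh_congr t _ _ _ _
          (fun u hu => hf u (le_trans hu (Nat.le_succ _)))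
          (fun u hu => hg (x :: u) (by simpa using Nat.succ_le_succ hu))

lemma psi_congr {ℓ m : ℕ} {d e : Fin ℓ → Series (Fin (m + 1))} {N : ℕ}
    (hde : ∀ i (u : List (Fin (m + 1))), u.length < N → d i u = e i u) :
    ∀ (v : List (Fin (ℓ + 1))) (w : List (Fin (m + 1))), w.length ≤ N →
      psiWord d v one w = psiWord e v one w := by
  intro v
  induction v with
  | nil => intro w _; rfl
  | cons i t ih =>
    intro w hw
    cases w with
    | nil => rfl
    | cons y t' =>
      have ht' : t'.length + 1 ≤ N := by simpa using hw
      have hl : ∀ s : Series (Fin (m + 1)),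
          leftc (0 : Fin (m + 1)) s (y :: t') = if y = 0 then s t' else 0 := fun _ => rfl
      simp only [psiWord, hl]
      by_cases hy : y = 0
      · simp only [if_pos hy]
        refine sh_congr t' _ _ _ _ ?_ ?_
        · intro u hu
          refine Fin.cases ?_ ?_ i
          · rfl
          · intro j
            exact hde j u (lt_of_le_of_lt hu (by omega))
        · intro u hu
          exact ih u (le_trans hu (by omega))
      · simp only [if_neg hy]

lemma comp_congr {ℓ m : ℕ} {c : Series (Fin (ℓ + 1))} {d e : Fin ℓ → Series (Fin (m + 1))}
    {N : ℕ} (hde : ∀ i (u : List (Fin (m + 1))), u.length < N → d i u = e i u)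
    {η : List (Fin (m + 1))} (hη : η.length ≤ N) :
    comp c d η = comp c e η := by
  unfold comp
  refine Finset.sum_congr rfl fun k _ => Finset.sum_congr rfl fun v _ => ?_
  rw [psi_congr hde v.toList η hη]

end Aux

/-- The composition product is a strong contraction in its right argument:
`κ(c ∘ d, c ∘ e) ≤ σ · κ(d, e)`. -/
theorem comp_strong_contraction (ℓ m : ℕ) (σ : ℝ) (hσ0 : 0 < σ) (hσ1 : σ < 1)
    (c : Series (Fin (ℓ + 1))) (d e : Fin ℓ → Series (Fin (m + 1))) :
    kappa σ (comp c d) (comp c e) ≤ σ * kappaV σ d e := by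
  unfold kappa kappaV
  cases hN : ordV (d - e) with
  | top =>
    have hall : ∀ i, ord (d i - e i) = ⊤ := by
      have := (iInf_eq_top.mp hN)
      simpa [ordV] using this
    have hde : d = e := by
      funext i w
      have h0 : (d i - e i) w = 0 :=
        eq_zero_of_lt_ord (by rw [hall i]; exact WithTop.coe_lt_top _)
      have := h0
      simp only [Pi.sub_apply] at this
      linarith
    subst hde
    have : ord (comp c d - comp c d) = ⊤ := by
      rw [show comp c d - comp c d = 0 by ring]
      refine top_le_iff.mp (le_ord fun w _ => rfl)
    rw [this]
    simp [powE]
  | coe N =>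
    have hle : ∀ i, (N : ℕ∞) ≤ ord (d i - e i) := by
      intro i
      rw [← hN]
      exact iInf_le _ i
    have hde : ∀ i (u : List (Fin (m + 1))), u.length < N → d i u = e i u := by
      intro i u hu
      have h0 : (d i - e i) u = 0 :=
        eq_zero_of_lt_ord (lt_of_lt_of_le (by exact_mod_cast hu) (hle i))
      simp only [Pi.sub_apply] at h0
      linarith
    have hord : ((N + 1 : ℕ) : ℕ∞) ≤ ord (comp c d - comp c e) := by
      refine le_ord fun w hw => ?_
      have hwlen : w.length ≤ N := by
        have : w.length < N + 1 := by exact_mod_cast hw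
        omega
      simp only [Pi.sub_apply, comp_congr hde hwlen, sub_self]
    calc powE σ (ord (comp c d - comp c e)) ≤ powE σ ((N + 1 : ℕ) : ℕ∞) :=
          powE_anti hσ0 hσ1 hord
      _ = σ * powE σ (N : ℕ∞) := by
          rw [powE_coe, powE_coe, pow_succ, mul_comm]

end FPS
end

section
/- For any word η ∈ X* and series d, e ∈ ℝ^m⟨⟨X⟩⟩, the multiplicative mixed composition product satisfies κ(η ∘̄ δ_d, η ∘̄ δ_e) ≤ σ^{|η|} κ(d,e), where κ is the ultrametric on formal power series. -/
open scoped BigOperators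

namespace FPS

section Aux

variable {X : Type*} [DecidableEq X]

lemma sh_sub_left (a b c : Series X) :
    ∀ w, sh (fun u => a u - b u) c w = sh a c w - sh b c w := by
  intro w
  induction w generalizing a b c with
  | nil => simp only [sh]; ring
  | cons x t ih =>
      simp only [sh]
      rw [ih (fun u => a (x :: u)) (fun u => b (x :: u)) c,
        ih a b (fun u => c (x :: u))]
      ring

lemma sh_sub_right (a b c : Series X) :
    ∀ w, sh a (fun u => b u - c u) w = sh a b w - sh a c w := by
  intro w
  induction w generalizing a b c with
  | nil => simp only [sh]; ring
  | cons x t ih =>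
      simp only [sh]
      rw [ih (fun u => a (x :: u)) b c,
        ih a (fun u => b (x :: u)) (fun u => c (x :: u))]
      ring

lemma sh_eq_zero :
    ∀ (w : List X) (a b : Series X) (na nb : ℕ),
      (∀ u : List X, u.length < na → a u = 0) →
      (∀ u : List X, u.length < nb → b u = 0) →
      w.length < na + nb → sh a b w = 0 := by
  intro w
  induction w with
  | nil =>
      intro a b na nb ha hb hlen
      simp only [List.length_nil] at hlen
      simp only [sh]
      by_cases h : 0 < na
      · rw [ha [] (by simpa using h)]; ring
      · rw [hb [] (by simp; omega)]; ring
  | cons x t ih =>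
      intro a b na nb ha hb hlen
      simp only [List.length_cons] at hlen
      simp only [sh]
      rw [ih _ _ (na - 1) nb
          (fun u hu => ha (x :: u) (by simp; omega)) hb (by omega),
        ih _ _ na (nb - 1) ha
          (fun u hu => hb (x :: u) (by simp; omega)) (by omega)]
      ring

lemma phi_eq_zero {m : ℕ} :
    ∀ (η : List (Fin (m + 1))) (d : Fin m → Series (Fin (m + 1)))
      (w : List (Fin (m + 1))), w.length < η.length → phiWord d η one w = 0 := by
  intro η
  induction η with
  | nil => intro d w hw; simp at hw
  | cons i t ih =>
      intro d w hw
      induction i using Fin.cases with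
      | zero =>
          simp only [phiWord, Fin.cases_zero]
          match w with
          | [] => simp [leftc]
          | y :: u =>
              simp only [leftc]
              split
              · exact ih d u (by simp at hw; omega)
              · rfl
      | succ j =>
          simp only [phiWord, Fin.cases_succ]
          match w with
          | [] => simp [leftc]
          | y :: u =>
              simp only [leftc]
              split
              · exact sh_eq_zero u (d j) (phiWord d t one) 0 t.length
                  (fun v hv => by omega)
                  (fun v hv => ih d v hv) (by simp at hw; omega)
              · rfl

lemma phi_diff_zero {m : ℕ} (N : ℕ) :
    ∀ (η : List (Fin (m + 1))) (d e : Fin m → Series (Fin (m + 1))),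
      (∀ i u, u.length < N → d i u = e i u) →
      ∀ w : List (Fin (m + 1)), w.length < η.length + N →
        phiWord d η one w = phiWord e η one w := by
  intro η
  induction η with
  | nil => intro d e _ w _; rfl
  | cons i t ih =>
      intro d e hde w hw
      induction i using Fin.cases with
      | zero =>
          simp only [phiWord, Fin.cases_zero]
          match w with
          | [] => rfl
          | y :: u =>
              simp only [leftc]
              split
              · exact ih d e hde u (by simp at hw; omega)
              · rfl
      | succ j =>
          simp only [phiWord, Fin.cases_succ]
          match w with
          | [] => rfl
          | y :: u =>
              simp only [leftc]
              split
              · have hu : u.length < t.length + N := by simp at hw; omega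
                have h1 : sh (fun v => d j v - e j v) (phiWord d t one) u = 0 :=
                  sh_eq_zero u _ _ N t.length
                    (fun v hv => by rw [hde j v hv]; ring)
                    (fun v hv => phi_eq_zero t d v hv) (by omega)
                have h2 : sh (e j)
                    (fun v => phiWord d t one v - phiWord e t one v) u = 0 :=
                  sh_eq_zero u _ _ 0 (t.length + N)
                    (fun v hv => by omega)
                    (fun v hv => by rw [ih d e hde v hv]; ring) (by omega)
                rw [sh_sub_left] at h1
                rw [sh_sub_right] at h2
                have := sub_eq_zero.mp h1
                have := sub_eq_zero.mp h2
                calc sh (d j) (phiWord d t one) u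
                    = sh (e j) (phiWord d t one) u := sub_eq_zero.mp h1
                  _ = sh (e j) (phiWord e t one) u := sub_eq_zero.mp h2
              · rfl

lemma ord_ge_of (c : Series X) (n : ℕ) (h : ∀ w, w.length < n → c w = 0) :
    (n : ℕ∞) ≤ ord c := by
  apply le_sInf
  rintro a ⟨w, hw, rfl⟩
  by_contra hlt
  push_neg at hlt
  exact hw (h w (by exact_mod_cast hlt))

lemma ord_le_of (c : Series X) (w : List X) (hw : c w ≠ 0) :
    ord c ≤ (w.length : ℕ∞) :=
  sInf_le ⟨w, hw, rfl⟩

lemma eq_zero_of_ord_top (c : Series X) (h : ord c = ⊤) : ∀ w, c w = 0 := by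
  intro w
  by_contra hw
  have h1 := ord_le_of c w hw
  rw [h, top_le_iff] at h1
  exact (WithTop.natCast_ne_top w.length) h1

lemma powE_nonneg (σ : ℝ) (h0 : 0 ≤ σ) (n : ℕ∞) : 0 ≤ powE σ n := by
  unfold powE
  split
  · exact le_refl 0
  · exact pow_nonneg h0 _

lemma powE_le (σ : ℝ) (h0 : 0 ≤ σ) (h1 : σ ≤ 1) {a b : ℕ∞} (hab : a ≤ b) :
    powE σ b ≤ powE σ a := by
  unfold powE
  rcases eq_or_ne b ⊤ with rfl | hb
  · rw [if_pos rfl]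
    split
    · exact le_refl 0
    · exact pow_nonneg h0 _
  · have ha : a ≠ ⊤ := by
      intro h; rw [h, top_le_iff] at hab; exact hb hab
    simp only [hb, ha, if_neg, ite_false]
    exact pow_le_pow_of_le_one h0 h1 (ENat.toNat_le_toNat hab hb)

end Aux

/-- For any word `η`, `κ(η ∘̄ δ_d, η ∘̄ δ_e) ≤ σ^{|η|} κ(d, e)`.
Here `η ∘̄ δ_d = φ̄_d(η)(1)`. -/
theorem word_mix_contraction (m : ℕ) (σ : ℝ) (hσ0 : 0 < σ) (hσ1 : σ < 1)
    (η : List (Fin (m + 1))) (d e : Fin m → Series (Fin (m + 1))) :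
    kappa σ (phiWord d η one) (phiWord e η one) ≤ σ ^ η.length * kappaV σ d e := by
  by_cases htop : ordV (d - e) = ⊤
  · have hde : d = e := by
      funext i w
      have hi : ord ((d - e) i) = ⊤ := by
        have h := htop
        rw [ordV, iInf_eq_top] at h
        exact h i
      have h0 := eq_zero_of_ord_top _ hi w
      have : d i w - e i w = 0 := h0
      linarith
    subst hde
    have hz : ord (phiWord d η one - phiWord d η one) = ⊤ := by
      have : {w : List (Fin (m + 1)) |
          (phiWord d η one - phiWord d η one) w ≠ 0} = ∅ := by
        ext w; simp
      rw [ord, this]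
      simp
    rw [kappa, hz]
    simp only [powE, if_pos rfl]
    exact mul_nonneg (pow_nonneg hσ0.le _) (powE_nonneg σ hσ0.le _)
  · obtain ⟨N, hN⟩ := WithTop.ne_top_iff_exists.mp htop
    have hcomp : ∀ i, (N : ℕ∞) ≤ ord ((d - e) i) := by
      intro i
      have h2 : ordV (d - e) ≤ ord ((d - e) i) := iInf_le _ i
      rw [← hN] at h2
      exact h2
    have hde : ∀ i u, u.length < N → d i u = e i u := by
      intro i u hu
      by_contra h
      have hne : (d - e) i u ≠ 0 := by
        simp only [Pi.sub_apply]
        exact sub_ne_zero.mpr h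
      have h1 := ord_le_of _ u hne
      have h2 := hcomp i
      have := le_trans h2 h1
      exact absurd (by exact_mod_cast this) (by omega)
    have hord : ((η.length + N : ℕ) : ℕ∞) ≤
        ord (phiWord d η one - phiWord e η one) := by
      apply ord_ge_of
      intro w hw
      have := phi_diff_zero N η d e hde w hw
      simp only [Pi.sub_apply]
      rw [this]; ring
    have hle : kappa σ (phiWord d η one) (phiWord e η one) ≤
        powE σ ((η.length + N : ℕ) : ℕ∞) := by
      rw [kappa]
      exact powE_le σ hσ0.le hσ1.le hord
    have hval : powE σ ((η.length + N : ℕ) : ℕ∞) = σ ^ η.length * σ ^ N := by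
      have hne : ((η.length + N : ℕ) : ℕ∞) ≠ ⊤ := WithTop.natCast_ne_top _
      simp only [powE]
      rw [if_neg hne, ENat.toNat_coe, pow_add]
    have hkv : kappaV σ d e = σ ^ N := by
      rw [kappaV, ← hN]
      simp only [powE]
      rw [if_neg (by exact_mod_cast ENat.coe_ne_top N)]
      norm_cast
    rw [hkv]
    rw [hval] at hle
    exact hle

end FPS
end
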